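/- Let C_0, …, C_{p−1} be d×d real matrices, let M be their companion block matrix, and let E_p denote the pd×d matrix consisting of p−1 zero d×d blocks stacked above an identity block I_d. If I_{pd} − M is invertible, then I_d − ∑_{k=0}^{p−1} C_k is invertible and E_p^⊤ (I_{pd} − M)^{-1} E_p = ( I_d − ∑_{k=0}^{p−1} C_k )^{-1}. -/

import Mathlib

/-- The companion block matrix of `d×d` matrices `C 0, …, C (p-1)`: the `pd×pd`
block matrix with identity blocks `I_d` on the block superdiagonal, bottom block
row `(C 0, C 1, …, C (p-1))`, and zero blocks elsewhere. -/
def companion {p d : ℕ} {R : Type*} [CommRing R]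
    (C : Fin p → Matrix (Fin d) (Fin d) R) :
    Matrix (Fin p × Fin d) (Fin p × Fin d) R :=
  Matrix.of fun x y =>
    if (x.1 : ℕ) + 1 = p then (C y.1) x.2 y.2
    else if (y.1 : ℕ) = (x.1 : ℕ) + 1 then (if x.2 = y.2 then 1 else 0) else 0

/-- The `pd×d` matrix `E_p = (0_d, …, 0_d, I_d)ᵀ`: `p-1` zero `d×d` blocks stacked
above an identity block `I_d`. -/
def Emat (p d : ℕ) (R : Type*) [CommRing R] : Matrix (Fin p × Fin d) (Fin d) R :=
  Matrix.of fun x b => if (x.1 : ℕ) + 1 = p ∧ x.2 = b then 1 else 0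

def Vmat (p d : ℕ) (R : Type*) [CommRing R] : Matrix (Fin p × Fin d) (Fin d) R :=
  Matrix.of fun x b => if x.2 = b then 1 else 0

lemma lemA {p d : ℕ} (C : Fin p → Matrix (Fin d) (Fin d) ℝ) :
    (1 - companion C) * Vmat p d ℝ = Emat p d ℝ * (1 - ∑ k : Fin p, C k) := by
  ext ⟨i, a⟩ b
  simp only [Matrix.mul_apply, Matrix.sub_apply, Matrix.one_apply, companion, Emat, Vmat,
    Matrix.of_apply, Fintype.sum_prod_type, Matrix.sum_apply]
  by_cases hip : (i : ℕ) + 1 = p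
  · simp only [hip, if_true, true_and, Prod.mk.injEq, sub_mul, Finset.sum_sub_distrib,
      ite_mul, one_mul, zero_mul, ite_and, Finset.sum_ite_eq, Finset.sum_ite_eq',
      Finset.mem_univ, if_true]
    rw [Finset.sum_comm]
    simp [Finset.sum_ite_eq', eq_comm]
  · have hj : (i : ℕ) + 1 < p := lt_of_le_of_ne i.2 hip
    simp only [hip, if_false, false_and, Prod.mk.injEq, sub_mul, Finset.sum_sub_distrib,
      ite_mul, one_mul, zero_mul, ite_and, Finset.sum_ite_eq, Finset.sum_ite_eq',
      Finset.mem_univ, if_true, zero_mul, Finset.sum_const_zero, zero_sub, zero_mul]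
    simp only [show ∀ x : Fin p, ((x : ℕ) = (i : ℕ) + 1) ↔ x = ⟨(i : ℕ) + 1, hj⟩ from
      fun x => by rw [Fin.ext_iff], Finset.sum_ite_eq', Finset.mem_univ, if_true]
    simp [eq_comm]

lemma lemB {p d : ℕ} (hp : 0 < p) :
    (Emat p d ℝ).transpose * Vmat p d ℝ = 1 := by
  have hj : p - 1 < p := Nat.sub_lt hp one_pos
  ext a b
  simp only [Matrix.mul_apply, Matrix.transpose_apply, Emat, Vmat, Matrix.of_apply,
    Fintype.sum_prod_type, Matrix.one_apply, ite_and, ite_mul, one_mul, zero_mul]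
  simp only [show ∀ x : Fin p, ((x : ℕ) + 1 = p) ↔ x = ⟨p - 1, hj⟩ from
    fun x => by simp only [Fin.ext_iff]; omega]
  simp [Finset.sum_ite_eq', eq_comm]

theorem stmt_9 {p d : ℕ} (hp : 0 < p) (C : Fin p → Matrix (Fin d) (Fin d) ℝ)
    (h : IsUnit (1 - companion C)) :
    IsUnit (1 - ∑ k : Fin p, C k) ∧
    (Emat p d ℝ).transpose * (1 - companion C)⁻¹ * (Emat p d ℝ) =
      (1 - ∑ k : Fin p, C k)⁻¹ := by
  have hdet : IsUnit (1 - companion C).det := (Matrix.isUnit_iff_isUnit_det _).mp h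
  have h1 : Vmat p d ℝ = (1 - companion C)⁻¹ * (Emat p d ℝ * (1 - ∑ k : Fin p, C k)) := by
    rw [← lemA C, ← Matrix.mul_assoc, Matrix.nonsing_inv_mul _ hdet, Matrix.one_mul]
  have h2 : (Emat p d ℝ).transpose * (1 - companion C)⁻¹ * (Emat p d ℝ) *
      (1 - ∑ k : Fin p, C k) = 1 := by
    rw [Matrix.mul_assoc, Matrix.mul_assoc, ← h1, lemB hp]
  exact ⟨(Matrix.isUnit_iff_isUnit_det _).mpr (Matrix.isUnit_det_of_right_inverse (mul_eq_one_comm.mp h2)), (Matrix.inv_eq_left_inv h2).symm⟩
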